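/- arXiv:2007.06803 — 8 statements merged into one kernel-verified Lean document; each statement's English description precedes it below -/
import Mathlib

section
/- Let m ≥ 1, r > 0, and let X, X' ∈ ℝ^m with ‖X' − X‖₂ ≤ r. Let x, x' ∈ ℝ^m, M ∈ ℝ^{m×m}, c ∈ ℝ^m, and fix an index j ∈ {1,…,m}. Set a = ∑_{i=1}^m M_{i,j} x_i + c_j and a' = ∑_{i=1}^m M_{i,j} x'_i + c_j. Suppose there are flags P : {1,…,m} → {0,1}, a matrix L ∈ ℝ^{m×m} with rows L_i, a vector d ∈ ℝ^m, and nonnegative bounds U ∈ ℝ^m such that: (i) for every i with P_i = 0, x_i = ∑_{l=1}^m L_{i,l} X_l + d_i and x'_i = ∑_{l=1}^m L_{i,l} X'_l + d_i; (ii) for every i, |x'_i − x_i| ≤ U_i. Then |a' − a| ≤ ∑_{i : P_i = 1} |M_{i,j}| · U_i + r · ‖∑_{i : P_i = 0} M_{i,j} · L_i‖₂, where ‖·‖₂ is the Euclidean norm on ℝ^m. -/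
open Finset

/-- Lemma 4.2 of the paper: the key perturbation inequality for the
pre-activation of neuron `j` at the next layer of a ReLU network. -/
theorem preactivation_perturbation_bound
    (m : ℕ) (hm : 1 ≤ m) (r : ℝ) (hr : 0 < r)
    (X X' : EuclideanSpace ℝ (Fin m)) (hXX' : ‖X' - X‖ ≤ r)
    (x x' : Fin m → ℝ) (M : Matrix (Fin m) (Fin m) ℝ) (c : Fin m → ℝ) (j : Fin m)
    (P : Fin m → ℕ) (hP : ∀ i, P i = 0 ∨ P i = 1)
    (L : Fin m → EuclideanSpace ℝ (Fin m)) (d : Fin m → ℝ)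
    (U : Fin m → ℝ) (hU : ∀ i, 0 ≤ U i)
    (a a' : ℝ)
    (ha : a = (∑ i, M i j * x i) + c j)
    (ha' : a' = (∑ i, M i j * x' i) + c j)
    (haff : ∀ i, P i = 0 →
      x i = (∑ l, L i l * X l) + d i ∧ x' i = (∑ l, L i l * X' l) + d i)
    (hUb : ∀ i, |x' i - x i| ≤ U i) :
    |a' - a| ≤
      (∑ i ∈ Finset.univ.filter (fun i => P i = 1), |M i j| * U i) +
        r * ‖∑ i ∈ Finset.univ.filter (fun i => P i = 0), M i j • L i‖ := by
  set S0 := Finset.univ.filter (fun i => P i = 0) with hS0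
  set S1 := Finset.univ.filter (fun i => P i = 1) with hS1
  set v : EuclideanSpace ℝ (Fin m) := ∑ i ∈ S0, M i j • L i with hv
  have hva : ∀ l, v l = ∑ i ∈ S0, M i j * L i l := by
    intro l
    rw [hv]
    rw [WithLp.ofLp_sum]; exact Finset.sum_apply l S0 _
  have hsplit : a' - a = (∑ i ∈ S1, M i j * (x' i - x i))
      + (∑ i ∈ S0, M i j * (x' i - x i)) := by
    rw [ha, ha']
    have h1 : (∑ i, M i j * x' i) - (∑ i, M i j * x i)
        = ∑ i, M i j * (x' i - x i) := by
      rw [← Finset.sum_sub_distrib]; exact Finset.sum_congr rfl (fun i _ => by ring)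
    rw [add_sub_add_right_eq_sub, h1,
      ← Finset.sum_filter_add_sum_filter_not Finset.univ (fun i => P i = 1)]
    congr 1
    apply Finset.sum_congr _ (fun _ _ => rfl)
    ext i
    simp only [Finset.mem_filter, Finset.mem_univ, true_and, hS0]
    rcases hP i with h | h <;> simp [h]
  have hinner : (∑ i ∈ S0, M i j * (x' i - x i)) = inner ℝ v (X' - X) := by
    have hIP : (inner ℝ v (X' - X) : ℝ) = ∑ l, v l * (X' l - X l) := by
      simp [PiLp.inner_apply, RCLike.inner_apply, PiLp.sub_apply, mul_comm]
    rw [hIP]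
    calc (∑ i ∈ S0, M i j * (x' i - x i))
        = ∑ i ∈ S0, ∑ l, (M i j * L i l) * (X' l - X l) := by
          refine Finset.sum_congr rfl (fun i hi => ?_)
          have hPi : P i = 0 := by simpa [hS0] using hi
          obtain ⟨h1, h2⟩ := haff i hPi
          rw [h1, h2]
          rw [add_sub_add_right_eq_sub, ← Finset.sum_sub_distrib, Finset.mul_sum]
          exact Finset.sum_congr rfl (fun l _ => by ring)
      _ = ∑ l, (∑ i ∈ S0, M i j * L i l) * (X' l - X l) := by
          rw [Finset.sum_comm]
          exact Finset.sum_congr rfl (fun l _ => by rw [Finset.sum_mul])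
      _ = ∑ l, v l * (X' l - X l) := by
          exact Finset.sum_congr rfl (fun l _ => by rw [hva])
  have hb1 : |∑ i ∈ S1, M i j * (x' i - x i)| ≤ ∑ i ∈ S1, |M i j| * U i := by
    refine (Finset.abs_sum_le_sum_abs _ _).trans (Finset.sum_le_sum (fun i _ => ?_))
    rw [abs_mul]
    exact mul_le_mul_of_nonneg_left (hUb i) (abs_nonneg _)
  have hb0 : |(inner ℝ v (X' - X) : ℝ)| ≤ r * ‖v‖ := by
    refine (abs_real_inner_le_norm v (X' - X)).trans ?_
    rw [mul_comm]
    exact mul_le_mul_of_nonneg_right hXX' (norm_nonneg _)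
  calc |a' - a| ≤ |∑ i ∈ S1, M i j * (x' i - x i)| + |(inner ℝ v (X' - X) : ℝ)| := by
        rw [hsplit, hinner]; exact abs_add_le _ _
    _ ≤ (∑ i ∈ S1, |M i j| * U i) + r * ‖v‖ := add_le_add hb1 hb0
end

section
/- Let m ≥ 1, r > 0, and let X, X' ∈ ℝ^m with ‖X' − X‖₂ ≤ r. Let x, x' ∈ ℝ^m, M ∈ ℝ^{m×m}, c ∈ ℝ^m, and fix an index j ∈ {1,…,m}. Set a = ∑_{i=1}^m M_{i,j} x_i + c_j and a' = ∑_{i=1}^m M_{i,j} x'_i + c_j. Suppose there are flags P : {1,…,m} → {0,1}, a matrix L ∈ ℝ^{m×m} with rows L_i, a vector d ∈ ℝ^m, and nonnegative bounds U ∈ ℝ^m such that: (i) for every i with P_i = 0, x_i = ∑_{l=1}^m L_{i,l} X_l + d_i and x'_i = ∑_{l=1}^m L_{i,l} X'_l + d_i; (ii) for every i, |x'_i − x_i| ≤ U_i. If a < 0 and a + ∑_{i : P_i = 1} |M_{i,j}| · U_i + r · ‖∑_{i : P_i = 0} M_{i,j} · L_i‖₂ < 0, then a' < 0 and max(a', 0)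 = 0. -/
open Finset

/-- The negative-pre-activation case in the proof of Proposition 4.1: a neuron
that is strictly inactive by more than the perturbation margin stays inactive
for every perturbed input in the radius-`r` ball. -/
theorem inactive_neuron_stays_inactive
    (m : ℕ) (hm : 1 ≤ m) (r : ℝ) (hr : 0 < r)
    (X X' : EuclideanSpace ℝ (Fin m)) (hXX' : ‖X' - X‖ ≤ r)
    (x x' : Fin m → ℝ) (M : Matrix (Fin m) (Fin m) ℝ) (c : Fin m → ℝ) (j : Fin m)
    (P : Fin m → ℕ) (hP : ∀ i, P i = 0 ∨ P i = 1)
    (L : Fin m → EuclideanSpace ℝ (Fin m)) (d : Fin m → ℝ)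
    (U : Fin m → ℝ) (hU : ∀ i, 0 ≤ U i)
    (a a' : ℝ)
    (ha : a = (∑ i, M i j * x i) + c j)
    (ha' : a' = (∑ i, M i j * x' i) + c j)
    (haff : ∀ i, P i = 0 →
      x i = (∑ l, L i l * X l) + d i ∧ x' i = (∑ l, L i l * X' l) + d i)
    (hUb : ∀ i, |x' i - x i| ≤ U i)
    (haneg : a < 0)
    (hmargin : a + ((∑ i ∈ Finset.univ.filter (fun i => P i = 1), |M i j| * U i) +
      r * ‖∑ i ∈ Finset.univ.filter (fun i => P i = 0), M i j • L i‖) < 0) :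
    a' < 0 ∧ max a' 0 = 0 := by
  set S0 := Finset.univ.filter (fun i => P i = 0) with hS0
  set S1 := Finset.univ.filter (fun i => P i = 1) with hS1
  set v : EuclideanSpace ℝ (Fin m) := ∑ i ∈ S0, M i j • L i with hv
  have hdiff : a' - a = ∑ i, M i j * (x' i - x i) := by
    rw [ha, ha']
    simp [mul_sub, Finset.sum_sub_distrib]
  have hsplit : (∑ i, M i j * (x' i - x i)) =
      (∑ i ∈ S0, M i j * (x' i - x i)) + ∑ i ∈ S1, M i j * (x' i - x i) := by
    rw [hS0, hS1, ← Finset.sum_filter_add_sum_filter_not Finset.univ (fun i => P i = 0)]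
    congr 1
    apply Finset.sum_congr _ (fun _ _ => rfl)
    apply Finset.filter_congr
    intro i _
    rcases hP i with h | h <;> simp [h]
  -- S0 part equals an inner product
  have hvl : ∀ l, v l = ∑ i ∈ S0, M i j * L i l := by
    intro l
    rw [hv]
    classical
    induction S0 using Finset.induction with
    | empty => simp
    | insert _ _ hnot ih =>
        rw [Finset.sum_insert hnot, Finset.sum_insert hnot, ← ih]
        rfl
  have hS0eq : (∑ i ∈ S0, M i j * (x' i - x i)) = (inner ℝ v (X' - X) : ℝ) := by
    have hterm : ∀ i ∈ S0, M i j * (x' i - x i) = ∑ l, (M i j * L i l) * (X' l - X l) := by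
      intro i hi
      have hPi : P i = 0 := by simpa [hS0] using hi
      obtain ⟨h1, h2⟩ := haff i hPi
      rw [h1, h2, add_sub_add_right_eq_sub, ← Finset.sum_sub_distrib, Finset.mul_sum]
      exact Finset.sum_congr rfl (fun l _ => by ring)
    rw [Finset.sum_congr rfl hterm, Finset.sum_comm, PiLp.inner_apply]
    simp only [RCLike.inner_apply, conj_trivial]
    apply Finset.sum_congr rfl
    intro l _
    rw [hvl l, Finset.mul_sum]
    exact Finset.sum_congr rfl (fun i _ => by rw [mul_comm]; rfl)
  have hS0le : (∑ i ∈ S0, M i j * (x' i - x i)) ≤ r * ‖v‖ := by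
    rw [hS0eq]
    calc (inner ℝ v (X' - X) : ℝ) ≤ ‖v‖ * ‖X' - X‖ := real_inner_le_norm v (X' - X)
      _ ≤ ‖v‖ * r := by
          exact mul_le_mul_of_nonneg_left hXX' (norm_nonneg v)
      _ = r * ‖v‖ := mul_comm _ _
  have hS1le : (∑ i ∈ S1, M i j * (x' i - x i)) ≤ ∑ i ∈ S1, |M i j| * U i := by
    apply Finset.sum_le_sum
    intro i _
    calc M i j * (x' i - x i) ≤ |M i j * (x' i - x i)| := le_abs_self _
      _ = |M i j| * |x' i - x i| := abs_mul _ _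
      _ ≤ |M i j| * U i := mul_le_mul_of_nonneg_left (hUb i) (abs_nonneg _)
  have ha'lt : a' < 0 := by
    have : a' = a + ((∑ i ∈ S0, M i j * (x' i - x i)) + ∑ i ∈ S1, M i j * (x' i - x i)) := by
      rw [← hsplit, ← hdiff]; ring
    rw [this]
    calc a + ((∑ i ∈ S0, M i j * (x' i - x i)) + ∑ i ∈ S1, M i j * (x' i - x i))
        ≤ a + (r * ‖v‖ + ∑ i ∈ S1, |M i j| * U i) := by linarith
      _ = a + ((∑ i ∈ S1, |M i j| * U i) + r * ‖v‖) := by ring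
      _ < 0 := hmargin
  exact ⟨ha'lt, max_eq_right ha'lt.le⟩
end

section
/- Let m ≥ 1, r > 0, and let X, X' ∈ ℝ^m with ‖X' − X‖₂ ≤ r. Let x, x' ∈ ℝ^m, M ∈ ℝ^{m×m}, c ∈ ℝ^m, and fix an index j ∈ {1,…,m}. Set a = ∑_{i=1}^m M_{i,j} x_i + c_j and a' = ∑_{i=1}^m M_{i,j} x'_i + c_j. Suppose there are flags P : {1,…,m} → {0,1}, a matrix L ∈ ℝ^{m×m} with rows L_i, and a vector d ∈ ℝ^m such that for every i with P_i = 0, x_i = ∑_{l=1}^m L_{i,l} X_l + d_i and x'_i = ∑_{l=1}^m L_{i,l} X'_l + d_i. Assume additionally that P_i = 0 for every i with M_{i,j} ≠ 0, and that a > r · ‖∑_{i : P_i = 0} M_{i,j} · L_i‖₂. Then a' > 0 and max(a', 0) = a' = ∑_{l=1}^m (∑_{i : P_i = 0} M_{i,j} L_{i,l}) · X'_l + (∑_{i : P_i = 0} M_{i,j} d_i + c_j); in particular the post-activation of neuron j at the next layer is again an affine function of the perturbed input X' with coefficient row ∑_{i : P_i = 0} M_{i,j} L_i and constant ∑_{i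 : P_i = 0} M_{i,j} d_i + c_j. -/
open Finset

/-- The second case in the proof of Proposition 4.1: when every neuron feeding
into `j` with a nonzero weight is affine on the ball and the activation margin
exceeds the perturbation bound, the next-layer neuron is itself affine on the
whole ball, with explicitly composed coefficients. -/
theorem active_neuron_stays_affine
    (m : ℕ) (hm : 1 ≤ m) (r : ℝ) (hr : 0 < r)
    (X X' : EuclideanSpace ℝ (Fin m)) (hXX' : ‖X' - X‖ ≤ r)
    (x x' : Fin m → ℝ) (M : Matrix (Fin m) (Fin m) ℝ) (c : Fin m → ℝ) (j : Fin m)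
    (P : Fin m → ℕ) (hP : ∀ i, P i = 0 ∨ P i = 1)
    (L : Fin m → EuclideanSpace ℝ (Fin m)) (d : Fin m → ℝ)
    (a a' : ℝ)
    (ha : a = (∑ i, M i j * x i) + c j)
    (ha' : a' = (∑ i, M i j * x' i) + c j)
    (haff : ∀ i, P i = 0 →
      x i = (∑ l, L i l * X l) + d i ∧ x' i = (∑ l, L i l * X' l) + d i)
    (hM0 : ∀ i, M i j ≠ 0 → P i = 0)
    (hmargin : a > r * ‖∑ i ∈ Finset.univ.filter (fun i => P i = 0), M i j • L i‖) :
    a' > 0 ∧ max a' 0 = a' ∧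
      a' = (∑ l, (∑ i ∈ Finset.univ.filter (fun i => P i = 0), M i j * L i l) * X' l) +
        ((∑ i ∈ Finset.univ.filter (fun i => P i = 0), M i j * d i) + c j) := by
  classical
  set S := Finset.univ.filter (fun i => P i = 0) with hS
  set v : EuclideanSpace ℝ (Fin m) := ∑ i ∈ S, M i j • L i with hv
  have hne : ∀ i ∈ (Finset.univ : Finset (Fin m)), (fun i => M i j * x' i) i ≠ 0 → P i = 0 := by
    intro i _ h
    exact hM0 i (fun hMij => h (by simp [hMij]))
  have hne2 : ∀ i ∈ (Finset.univ : Finset (Fin m)), (fun i => M i j * x i) i ≠ 0 → P i = 0 := by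
    intro i _ h
    exact hM0 i (fun hMij => h (by simp [hMij]))
  have hsum' : ∑ i, M i j * x' i = ∑ i ∈ S, M i j * x' i :=
    (Finset.sum_filter_of_ne hne).symm
  have hsum : ∑ i, M i j * x i = ∑ i ∈ S, M i j * x i :=
    (Finset.sum_filter_of_ne hne2).symm
  have happ : ∀ (s : Finset (Fin m)) (f : Fin m → EuclideanSpace ℝ (Fin m)) (l : Fin m),
      (∑ i ∈ s, f i) l = ∑ i ∈ s, f i l := by
    intro s f l
    induction s using Finset.induction with
    | empty => rfl
    | @insert _ _ h ih => rw [Finset.sum_insert h, Finset.sum_insert h, ← ih]; rfl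
  have hvl : ∀ l, v l = ∑ i ∈ S, M i j * L i l := by
    intro l
    rw [hv, happ]
    exact Finset.sum_congr rfl fun i _ => rfl
  -- affine expansions
  have expand : ∀ (y : Fin m → ℝ) (Y : EuclideanSpace ℝ (Fin m)),
      (∀ i ∈ S, y i = (∑ l, L i l * Y l) + d i) →
      ∑ i ∈ S, M i j * y i = (∑ l, v l * Y l) + ∑ i ∈ S, M i j * d i := by
    intro y Y hy
    have : ∀ i ∈ S, M i j * y i = (∑ l, M i j * L i l * Y l) + M i j * d i := by
      intro i hi
      rw [hy i hi, mul_add, Finset.mul_sum]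
      ring_nf
    rw [Finset.sum_congr rfl this, Finset.sum_add_distrib, Finset.sum_comm]
    congr 1
    refine Finset.sum_congr rfl fun l _ => ?_
    rw [hvl l, Finset.sum_mul]
  have hmemS : ∀ i ∈ S, P i = 0 := fun i hi => (Finset.mem_filter.mp hi).2
  have key' : a' = (∑ l, v l * X' l) + (∑ i ∈ S, M i j * d i + c j) := by
    rw [ha', hsum', expand x' X' (fun i hi => (haff i (hmemS i hi)).2)]
    ring
  have key : a = (∑ l, v l * X l) + (∑ i ∈ S, M i j * d i + c j) := by
    rw [ha, hsum, expand x X (fun i hi => (haff i (hmemS i hi)).1)]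
    ring
  have hdiff : a' - a = inner ℝ v (X' - X) := by
    rw [key, key', PiLp.inner_apply]
    simp only [PiLp.sub_apply, RCLike.inner_apply, starRingEnd_apply, star_trivial]
    rw [add_sub_add_right_eq_sub, ← Finset.sum_sub_distrib]
    exact Finset.sum_congr rfl fun l _ => by ring
  have hbound : |a' - a| ≤ r * ‖v‖ := by
    rw [hdiff]
    calc |inner ℝ v (X' - X)| ≤ ‖v‖ * ‖X' - X‖ := abs_real_inner_le_norm v (X' - X)
    _ ≤ ‖v‖ * r := by
        exact mul_le_mul_of_nonneg_left hXX' (norm_nonneg v)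
    _ = r * ‖v‖ := mul_comm _ _
  have hpos : a' > 0 := by
    have := abs_le.mp hbound
    linarith
  refine ⟨hpos, max_eq_left hpos.le, ?_⟩
  rw [key']
  congr 1
  exact Finset.sum_congr rfl fun l _ => by rw [hvl l]
end

section
/- Let m ≥ 1, r > 0, and let X, X' ∈ ℝ^m with ‖X' − X‖₂ ≤ r. Let x, x' ∈ ℝ^m, M ∈ ℝ^{m×m}, c ∈ ℝ^m, and fix an index j ∈ {1,…,m}. Set a = ∑_{i=1}^m M_{i,j} x_i + c_j and a' = ∑_{i=1}^m M_{i,j} x'_i + c_j. Suppose there are flags P : {1,…,m} → {0,1}, a matrix L ∈ ℝ^{m×m} with rows L_i, a vector d ∈ ℝ^m, and nonnegative bounds U ∈ ℝ^m such that: (i) for every i with P_i = 0, x_i = ∑_{l=1}^m L_{i,l} X_l + d_i and x'_i = ∑_{l=1}^m L_{i,l} X'_l + d_i; (ii) for every i, |x'_i − x_i| ≤ U_i. If a > ∑_{i : P_i = 1} |M_{i,j}| · U_i + r · ‖∑_{i : P_i = 0} M_{i,j} · L_i‖₂, then a' > 0; in particular a · a' > 0. -/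
open Finset

/-- The positive-sign-preservation case in the proof of Proposition 4.1:
if the activation margin exceeds the perturbation bound, the perturbed
pre-activation is also strictly positive. -/
theorem active_neuron_sign_preserved
    (m : ℕ) (hm : 1 ≤ m) (r : ℝ) (hr : 0 < r)
    (X X' : EuclideanSpace ℝ (Fin m)) (hXX' : ‖X' - X‖ ≤ r)
    (x x' : Fin m → ℝ) (M : Matrix (Fin m) (Fin m) ℝ) (c : Fin m → ℝ) (j : Fin m)
    (P : Fin m → ℕ) (hP : ∀ i, P i = 0 ∨ P i = 1)
    (L : Fin m → EuclideanSpace ℝ (Fin m)) (d : Fin m → ℝ)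
    (U : Fin m → ℝ) (hU : ∀ i, 0 ≤ U i)
    (a a' : ℝ)
    (ha : a = (∑ i, M i j * x i) + c j)
    (ha' : a' = (∑ i, M i j * x' i) + c j)
    (haff : ∀ i, P i = 0 →
      x i = (∑ l, L i l * X l) + d i ∧ x' i = (∑ l, L i l * X' l) + d i)
    (hUb : ∀ i, |x' i - x i| ≤ U i)
    (hmargin : a > (∑ i ∈ Finset.univ.filter (fun i => P i = 1), |M i j| * U i) +
      r * ‖∑ i ∈ Finset.univ.filter (fun i => P i = 0), M i j • L i‖) :
    a' > 0 ∧ a * a' > 0 := by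
  set v : EuclideanSpace ℝ (Fin m) :=
    ∑ i ∈ Finset.univ.filter (fun i => P i = 0), M i j • L i with hv
  have hdiff : a' - a = ∑ i, M i j * (x' i - x i) := by
    have h : ∑ i, M i j * (x' i - x i) = ∑ i, (M i j * x' i - M i j * x i) := by
      apply Finset.sum_congr rfl; intro i _; ring
    rw [ha, ha', h, Finset.sum_sub_distrib]; ring
  have hsplit : (∑ i, M i j * (x' i - x i)) =
      (∑ i ∈ Finset.univ.filter (fun i => P i = 0), M i j * (x' i - x i))
      + (∑ i ∈ Finset.univ.filter (fun i => P i = 1), M i j * (x' i - x i)) := by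
    rw [← Finset.sum_filter_add_sum_filter_not Finset.univ (fun i => P i = 0)]
    congr 1
    apply Finset.sum_congr _ (fun _ _ => rfl)
    apply Finset.filter_congr
    intro i _
    rcases hP i with h | h <;> simp [h]
  have hS0 : (∑ i ∈ Finset.univ.filter (fun i => P i = 0), M i j * (x' i - x i))
      = inner ℝ v (X' - X) := by
    rw [hv, sum_inner]
    apply Finset.sum_congr rfl
    intro i hi
    simp only [Finset.mem_filter] at hi
    obtain ⟨hx, hx'⟩ := haff i hi.2
    rw [real_inner_smul_left]
    congr 1
    have : x' i - x i = ∑ l, L i l * (X' l - X l) := by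
      have h : ∑ l, L i l * (X' l - X l) = ∑ l, (L i l * X' l - L i l * X l) := by
        apply Finset.sum_congr rfl; intro l _; ring
      rw [hx, hx', h, Finset.sum_sub_distrib]; ring
    rw [this]
    rw [PiLp.inner_apply]
    apply Finset.sum_congr rfl
    intro l _
    simp [PiLp.sub_apply, RCLike.inner_apply, mul_comm]
  have hnormv : 0 ≤ ‖v‖ := norm_nonneg _
  have hS0b : |(inner ℝ v (X' - X) : ℝ)| ≤ r * ‖v‖ := by
    calc |(inner ℝ v (X' - X) : ℝ)| ≤ ‖v‖ * ‖X' - X‖ := abs_real_inner_le_norm v (X' - X)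
    _ ≤ ‖v‖ * r := by
        apply mul_le_mul_of_nonneg_left hXX' hnormv
    _ = r * ‖v‖ := mul_comm _ _
  have hS1b : |∑ i ∈ Finset.univ.filter (fun i => P i = 1), M i j * (x' i - x i)|
      ≤ ∑ i ∈ Finset.univ.filter (fun i => P i = 1), |M i j| * U i := by
    calc |∑ i ∈ Finset.univ.filter (fun i => P i = 1), M i j * (x' i - x i)|
        ≤ ∑ i ∈ Finset.univ.filter (fun i => P i = 1), |M i j * (x' i - x i)| :=
          Finset.abs_sum_le_sum_abs _ _
    _ ≤ ∑ i ∈ Finset.univ.filter (fun i => P i = 1), |M i j| * U i := by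
        apply Finset.sum_le_sum
        intro i _
        rw [abs_mul]
        exact mul_le_mul_of_nonneg_left (hUb i) (abs_nonneg _)
  have h1 := abs_le.mp hS0b
  have h2 := abs_le.mp hS1b
  have ha'pos : a' > 0 := by
    have : a' = a + (inner ℝ v (X' - X) : ℝ)
        + ∑ i ∈ Finset.univ.filter (fun i => P i = 1), M i j * (x' i - x i) := by
      rw [← hS0]
      have := hdiff
      rw [hsplit] at this
      linarith
    rw [this]
    linarith [h1.1, h2.1]
  have hapos : a > 0 := by
    have := hS0b
    nlinarith [abs_nonneg (∑ i ∈ Finset.univ.filter (fun i => P i = 1), M i j * (x' i - x i))]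
  exact ⟨ha'pos, mul_pos hapos ha'pos⟩
end

section
/- Let m ≥ 1, r > 0, and let X, X' ∈ ℝ^m with ‖X' − X‖₂ ≤ r. Let x, x' ∈ ℝ^m, M ∈ ℝ^{m×m}, c ∈ ℝ^m, and fix an index j ∈ {1,…,m}. Set a = ∑_{i=1}^m M_{i,j} x_i + c_j and a' = ∑_{i=1}^m M_{i,j} x'_i + c_j. Suppose there are flags P : {1,…,m} → {0,1}, a matrix L ∈ ℝ^{m×m} with rows L_i, a vector d ∈ ℝ^m, and nonnegative bounds U ∈ ℝ^m such that: (i) for every i with P_i = 0, x_i = ∑_{l=1}^m L_{i,l} X_l + d_i and x'_i = ∑_{l=1}^m L_{i,l} X'_l + d_i; (ii) for every i, |x'_i − x_i| ≤ U_i. If a > 0, then |max(a', 0) − max(a, 0)| ≤ ∑_{i : P_i = 1} |M_{i,j}| · U_i + r · ‖∑_{i : P_i = 0} M_{i,j} · L_i‖₂. -/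
open Finset

/-- The active case of the condition `U(k+1,r)` in the proof of Proposition
4.1: the post-activation perturbation of an active neuron is bounded by the
quantity `U^{k+1}_{r,j}` computed by Algorithm 1. -/
theorem postactivation_bound_active_case
    (m : ℕ) (hm : 1 ≤ m) (r : ℝ) (hr : 0 < r)
    (X X' : EuclideanSpace ℝ (Fin m)) (hXX' : ‖X' - X‖ ≤ r)
    (x x' : Fin m → ℝ) (M : Matrix (Fin m) (Fin m) ℝ) (c : Fin m → ℝ) (j : Fin m)
    (P : Fin m → ℕ) (hP : ∀ i, P i = 0 ∨ P i = 1)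
    (L : Fin m → EuclideanSpace ℝ (Fin m)) (d : Fin m → ℝ)
    (U : Fin m → ℝ) (hU : ∀ i, 0 ≤ U i)
    (a a' : ℝ)
    (ha : a = (∑ i, M i j * x i) + c j)
    (ha' : a' = (∑ i, M i j * x' i) + c j)
    (haff : ∀ i, P i = 0 →
      x i = (∑ l, L i l * X l) + d i ∧ x' i = (∑ l, L i l * X' l) + d i)
    (hUb : ∀ i, |x' i - x i| ≤ U i)
    (hapos : a > 0) :
    |max a' 0 - max a 0| ≤
      (∑ i ∈ Finset.univ.filter (fun i => P i = 1), |M i j| * U i) +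
        r * ‖∑ i ∈ Finset.univ.filter (fun i => P i = 0), M i j • L i‖ := by
  have hlip : |max a' 0 - max a 0| ≤ |a' - a| := abs_max_sub_max_le_abs a' a 0
  have hdiff : a' - a = ∑ i, M i j * (x' i - x i) := by
    rw [ha, ha']
    rw [Finset.sum_congr rfl (fun i _ => mul_sub (M i j) (x' i) (x i)),
      Finset.sum_sub_distrib]
    ring
  set s1 := Finset.univ.filter (fun i => P i = 1) with hs1
  set s0 := Finset.univ.filter (fun i => P i = 0) with hs0
  have hsplit : (Finset.univ : Finset (Fin m)) = s1 ∪ s0 := by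
    ext i
    simp only [hs1, hs0, Finset.mem_union, Finset.mem_filter, Finset.mem_univ, true_and]
    rcases hP i with h | h <;> simp [h]
  have hdisj : Disjoint s1 s0 := by
    rw [Finset.disjoint_left]
    intro i h1 h0
    rw [hs1, Finset.mem_filter] at h1
    rw [hs0, Finset.mem_filter] at h0
    omega
  have hsum : a' - a = (∑ i ∈ s1, M i j * (x' i - x i)) + ∑ i ∈ s0, M i j * (x' i - x i) := by
    rw [hdiff, hsplit, Finset.sum_union hdisj]
  -- Bound on s1 part
  have hb1 : |∑ i ∈ s1, M i j * (x' i - x i)| ≤ ∑ i ∈ s1, |M i j| * U i := by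
    refine (Finset.abs_sum_le_sum_abs _ _).trans (Finset.sum_le_sum fun i _ => ?_)
    rw [abs_mul]
    exact mul_le_mul_of_nonneg_left (hUb i) (abs_nonneg _)
  -- s0 part as inner product
  have hb0 : |∑ i ∈ s0, M i j * (x' i - x i)| ≤ r * ‖∑ i ∈ s0, M i j • L i‖ := by
    have heq : ∑ i ∈ s0, M i j * (x' i - x i) =
        inner ℝ (∑ i ∈ s0, M i j • L i) (X' - X) := by
      rw [sum_inner]
      refine Finset.sum_congr rfl fun i hi => ?_
      have hPi : P i = 0 := by
        simp only [hs0, Finset.mem_filter] at hi; exact hi.2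
      obtain ⟨hx, hx'⟩ := haff i hPi
      rw [hx, hx', inner_smul_left]
      simp only [RCLike.conj_to_real]
      rw [PiLp.inner_apply]
      simp only [RCLike.inner_apply, RCLike.conj_to_real]
      simp only [PiLp.sub_apply, mul_sub, sub_mul]
      rw [Finset.sum_sub_distrib]
      simp only [mul_comm (X'.ofLp _), mul_comm (X.ofLp _)]
      ring
    rw [heq]
    calc |inner ℝ (∑ i ∈ s0, M i j • L i) (X' - X)|
        ≤ ‖∑ i ∈ s0, M i j • L i‖ * ‖X' - X‖ := abs_real_inner_le_norm _ _
      _ ≤ ‖∑ i ∈ s0, M i j • L i‖ * r :=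
          mul_le_mul_of_nonneg_left hXX' (norm_nonneg _)
      _ = r * ‖∑ i ∈ s0, M i j • L i‖ := mul_comm _ _
  calc |max a' 0 - max a 0| ≤ |a' - a| := hlip
    _ ≤ |∑ i ∈ s1, M i j * (x' i - x i)| + |∑ i ∈ s0, M i j * (x' i - x i)| := by
        rw [hsum]; exact abs_add_le _ _
    _ ≤ _ := add_le_add hb1 hb0
end

section
/- Let m ≥ 1, r > 0, and let X, X' ∈ ℝ^m with ‖X' − X‖₂ ≤ r. Let x, x' ∈ ℝ^m, M ∈ ℝ^{m×m}, c ∈ ℝ^m, and fix an index j ∈ {1,…,m}. Set a = ∑_{i=1}^m M_{i,j} x_i + c_j and a' = ∑_{i=1}^m M_{i,j} x'_i + c_j. Suppose there are flags P : {1,…,m} → {0,1}, a matrix L ∈ ℝ^{m×m} with rows L_i, a vector d ∈ ℝ^m, and nonnegative bounds U ∈ ℝ^m such that: (i) for every i with P_i = 0, x_i = ∑_{l=1}^m L_{i,l} X_l + d_i and x'_i = ∑_{l=1}^m L_{i,l} X'_l + d_i; (ii) for every i, |x'_i − x_i| ≤ U_i. If a < 0, then max(a', 0) ≤ max(a + ∑_{i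 : P_i = 1} |M_{i,j}| · U_i + r · ‖∑_{i : P_i = 0} M_{i,j} · L_i‖₂, 0). -/
open Finset

/-- The inactive case of the condition `U(k+1,r)` in the proof of Proposition
4.1: when the center neuron is inactive, the perturbed post-activation is
bounded by the shifted bound computed by Algorithm 1. -/
theorem postactivation_bound_inactive_case
    (m : ℕ) (hm : 1 ≤ m) (r : ℝ) (hr : 0 < r)
    (X X' : EuclideanSpace ℝ (Fin m)) (hXX' : ‖X' - X‖ ≤ r)
    (x x' : Fin m → ℝ) (M : Matrix (Fin m) (Fin m) ℝ) (c : Fin m → ℝ) (j : Fin m)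
    (P : Fin m → ℕ) (hP : ∀ i, P i = 0 ∨ P i = 1)
    (L : Fin m → EuclideanSpace ℝ (Fin m)) (d : Fin m → ℝ)
    (U : Fin m → ℝ) (hU : ∀ i, 0 ≤ U i)
    (a a' : ℝ)
    (ha : a = (∑ i, M i j * x i) + c j)
    (ha' : a' = (∑ i, M i j * x' i) + c j)
    (haff : ∀ i, P i = 0 →
      x i = (∑ l, L i l * X l) + d i ∧ x' i = (∑ l, L i l * X' l) + d i)
    (hUb : ∀ i, |x' i - x i| ≤ U i)
    (haneg : a < 0) :
    max a' 0 ≤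
      max (a + ((∑ i ∈ Finset.univ.filter (fun i => P i = 1), |M i j| * U i) +
        r * ‖∑ i ∈ Finset.univ.filter (fun i => P i = 0), M i j • L i‖)) 0 := by
  apply max_le_max _ le_rfl
  have hdiff : a' - a = ∑ i, M i j * (x' i - x i) := by
    simp [ha, ha', mul_sub, Finset.sum_sub_distrib]
  set v : EuclideanSpace ℝ (Fin m) :=
    ∑ i ∈ Finset.univ.filter (fun i => P i = 0), M i j • L i with hv
  have hsplit : (∑ i, M i j * (x' i - x i)) =
      (∑ i ∈ Finset.univ.filter (fun i => P i = 1), M i j * (x' i - x i)) +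
      (∑ i ∈ Finset.univ.filter (fun i => P i = 0), M i j * (x' i - x i)) := by
    rw [← Finset.sum_filter_add_sum_filter_not Finset.univ (fun i => P i = 1)]
    congr 1
    apply Finset.sum_congr _ (fun _ _ => rfl)
    apply Finset.filter_congr
    intro i _
    rcases hP i with h | h <;> simp [h]
  have h1 : (∑ i ∈ Finset.univ.filter (fun i => P i = 1), M i j * (x' i - x i)) ≤
      ∑ i ∈ Finset.univ.filter (fun i => P i = 1), |M i j| * U i := by
    apply Finset.sum_le_sum
    intro i _
    calc M i j * (x' i - x i) ≤ |M i j * (x' i - x i)| := le_abs_self _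
      _ = |M i j| * |x' i - x i| := abs_mul _ _
      _ ≤ |M i j| * U i := by
        exact mul_le_mul_of_nonneg_left (hUb i) (abs_nonneg _)
  have h0 : (∑ i ∈ Finset.univ.filter (fun i => P i = 0), M i j * (x' i - x i)) ≤
      r * ‖v‖ := by
    have hinner : (∑ i ∈ Finset.univ.filter (fun i => P i = 0), M i j * (x' i - x i)) =
        inner ℝ v (X' - X) := by
      rw [hv, sum_inner]
      apply Finset.sum_congr rfl
      intro i hi
      rw [Finset.mem_filter] at hi
      obtain ⟨hx, hx'⟩ := haff i hi.2
      rw [real_inner_smul_left, PiLp.inner_apply]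
      simp only [RCLike.inner_apply, conj_trivial, PiLp.sub_apply]
      rw [hx, hx']
      rw [show ((∑ l, L i l * X' l) + d i) - ((∑ l, L i l * X l) + d i)
        = ∑ l, L i l * (X' l - X l) by simp only [mul_sub, Finset.sum_sub_distrib]; ring]
      exact congrArg _ (Finset.sum_congr rfl (fun l _ => mul_comm _ _))
    rw [hinner]
    calc inner ℝ v (X' - X) ≤ ‖v‖ * ‖X' - X‖ := real_inner_le_norm _ _
      _ ≤ ‖v‖ * r := mul_le_mul_of_nonneg_left hXX' (norm_nonneg _)
      _ = r * ‖v‖ := mul_comm _ _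
  linarith [h1, h0, hsplit, hdiff]
end

section
/- Let m ≥ 1, r > 0, and let X, X' ∈ ℝ^m with ‖X' − X‖₂ ≤ r. Let x, x' ∈ ℝ^m, M ∈ ℝ^{m×m}, c ∈ ℝ^m, and fix an index j ∈ {1,…,m}. Set a = ∑_{i=1}^m M_{i,j} x_i + c_j and a' = ∑_{i=1}^m M_{i,j} x'_i + c_j. Suppose there are flags P : {1,…,m} → {0,1}, a matrix L ∈ ℝ^{m×m} with rows L_i, a vector d ∈ ℝ^m, and nonnegative bounds U ∈ ℝ^m such that: (i) for every i with P_i = 0, x_i = ∑_{l=1}^m L_{i,l} X_l + d_i and x'_i = ∑_{l=1}^m L_{i,l} X'_l + d_i; (ii) for every i, |x'_i − x_i| ≤ U_i. If |a| > ∑_{i : P_i = 1} |M_{i,j}| · U_i + r · ‖∑_{i : P_i = 0} M_{i,j} · L_i‖₂, then a · a' > 0, i.e., the pre-activations of neuron j at the next layer for the two inputs have the same strict sign. -/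
open Finset RealInnerProductSpace

/-- The combined sign-preservation case in the proof of Proposition 4.1:
whenever the Algorithm 1 bound is smaller than the activation margin `|a|`,
the pre-activations for the two inputs have the same strict sign. -/
theorem sign_preserved_of_margin
    (m : ℕ) (hm : 1 ≤ m) (r : ℝ) (hr : 0 < r)
    (X X' : EuclideanSpace ℝ (Fin m)) (hXX' : ‖X' - X‖ ≤ r)
    (x x' : Fin m → ℝ) (M : Matrix (Fin m) (Fin m) ℝ) (c : Fin m → ℝ) (j : Fin m)
    (P : Fin m → ℕ) (hP : ∀ i, P i = 0 ∨ P i = 1)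
    (L : Fin m → EuclideanSpace ℝ (Fin m)) (d : Fin m → ℝ)
    (U : Fin m → ℝ) (hU : ∀ i, 0 ≤ U i)
    (a a' : ℝ)
    (ha : a = (∑ i, M i j * x i) + c j)
    (ha' : a' = (∑ i, M i j * x' i) + c j)
    (haff : ∀ i, P i = 0 →
      x i = (∑ l, L i l * X l) + d i ∧ x' i = (∑ l, L i l * X' l) + d i)
    (hUb : ∀ i, |x' i - x i| ≤ U i)
    (hmargin : |a| > (∑ i ∈ Finset.univ.filter (fun i => P i = 1), |M i j| * U i) +
      r * ‖∑ i ∈ Finset.univ.filter (fun i => P i = 0), M i j • L i‖) :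
    a * a' > 0 := by
  set S0 := Finset.univ.filter (fun i => P i = 0) with hS0
  set S1 := Finset.univ.filter (fun i => P i = 1) with hS1
  set v : EuclideanSpace ℝ (Fin m) := ∑ i ∈ S0, M i j • L i with hv
  have hsplit : a' - a = (∑ i ∈ S1, M i j * (x' i - x i)) + ⟪v, X' - X⟫ := by
    have h1 : a' - a = ∑ i, M i j * (x' i - x i) := by
      rw [ha, ha']
      rw [add_sub_add_right_eq_sub, ← Finset.sum_sub_distrib]
      congr 1; ext i; ring
    have hS1' : S1 = Finset.univ.filter (fun i => ¬ P i = 0) := by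
      rw [hS1]
      congr 1
      ext i
      rcases hP i with h | h <;> simp [h]
    have hinner : ⟪v, X' - X⟫ = ∑ i ∈ S0, M i j * (x' i - x i) := by
      rw [hv, sum_inner]
      refine Finset.sum_congr rfl fun i hi => ?_
      have hi0 : P i = 0 := by simpa [hS0] using hi
      obtain ⟨hx, hx'⟩ := haff i hi0
      rw [real_inner_smul_left, hx, hx']
      have : ⟪L i, X' - X⟫ = ∑ l, L i l * (X' l - X l) := by
        rw [PiLp.inner_apply]
        simp [PiLp.sub_apply]
        exact Finset.sum_congr rfl fun l _ => mul_comm _ _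
      rw [this]
      have : ((∑ l, L i l * X' l) + d i) - ((∑ l, L i l * X l) + d i)
          = ∑ l, L i l * (X' l - X l) := by
        rw [add_sub_add_right_eq_sub, ← Finset.sum_sub_distrib]
        congr 1; ext l; ring
      rw [this]
    rw [hinner, h1, hS1']
    rw [← Finset.sum_filter_add_sum_filter_not Finset.univ (fun i => P i = 0)]
    rw [hS0]; ring
  have hbound : |a' - a| ≤ (∑ i ∈ S1, |M i j| * U i) + r * ‖v‖ := by
    rw [hsplit]
    refine (abs_add_le _ _).trans (add_le_add ?_ ?_)
    · refine (Finset.abs_sum_le_sum_abs _ _).trans (Finset.sum_le_sum fun i _ => ?_)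
      rw [abs_mul]
      exact mul_le_mul_of_nonneg_left (hUb i) (abs_nonneg _)
    · calc |⟪v, X' - X⟫| ≤ ‖v‖ * ‖X' - X‖ := abs_real_inner_le_norm _ _
        _ ≤ ‖v‖ * r := mul_le_mul_of_nonneg_left hXX' (norm_nonneg _)
        _ = r * ‖v‖ := mul_comm _ _
  have hlt : |a' - a| < |a| := lt_of_le_of_lt hbound hmargin
  rcases le_or_gt 0 a with h | h
  · rw [abs_of_nonneg h, abs_lt] at hlt
    have ha0 : 0 < a := by linarith [abs_nonneg (a' - a), hlt.2]
    exact mul_pos ha0 (by linarith [hlt.1])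
  · rw [abs_of_neg h, abs_lt] at hlt
    exact mul_pos_of_neg_of_neg h (by linarith [hlt.2])
end

section
/- Let m ≥ 1, r > 0, and let X, X' ∈ ℝ^m with ‖X' − X‖₂ ≤ r. Let x, x' ∈ ℝ^m, M ∈ ℝ^{m×m}, c ∈ ℝ^m, and fix an index j ∈ {1,…,m}. Set a = ∑_{i=1}^m M_{i,j} x_i + c_j and a' = ∑_{i=1}^m M_{i,j} x'_i + c_j. Suppose there are flags P : {1,…,m} → {0,1}, a matrix L ∈ ℝ^{m×m} with rows L_i, a vector d ∈ ℝ^m, and nonnegative bounds U ∈ ℝ^m such that: (i) for every i with P_i = 0, x_i = ∑_{l=1}^m L_{i,l} X_l + d_i and x'_i = ∑_{l=1}^m L_{i,l} X'_l + d_i; (ii) for every i, |x'_i − x_i| ≤ U_i. Then, without any sign assumption on a, |max(a', 0) − max(a, 0)| ≤ ∑_{i : P_i = 1} |M_{i,j}| · U_i + r · ‖∑_{i : P_i = 0} M_{i,j} · L_i‖₂. -/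
open Finset

/-- The unconditional post-activation stability bound propagated by Algorithm
1: combining Lemma 4.2 with the 1-Lipschitz property of ReLU gives the
condition `U(k+1,r)` in all cases. -/
theorem postactivation_bound_unconditional
    (m : ℕ) (hm : 1 ≤ m) (r : ℝ) (hr : 0 < r)
    (X X' : EuclideanSpace ℝ (Fin m)) (hXX' : ‖X' - X‖ ≤ r)
    (x x' : Fin m → ℝ) (M : Matrix (Fin m) (Fin m) ℝ) (c : Fin m → ℝ) (j : Fin m)
    (P : Fin m → ℕ) (hP : ∀ i, P i = 0 ∨ P i = 1)
    (L : Fin m → EuclideanSpace ℝ (Fin m)) (d : Fin m → ℝ)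
    (U : Fin m → ℝ) (hU : ∀ i, 0 ≤ U i)
    (a a' : ℝ)
    (ha : a = (∑ i, M i j * x i) + c j)
    (ha' : a' = (∑ i, M i j * x' i) + c j)
    (haff : ∀ i, P i = 0 →
      x i = (∑ l, L i l * X l) + d i ∧ x' i = (∑ l, L i l * X' l) + d i)
    (hUb : ∀ i, |x' i - x i| ≤ U i) :
    |max a' 0 - max a 0| ≤
      (∑ i ∈ Finset.univ.filter (fun i => P i = 1), |M i j| * U i) +
        r * ‖∑ i ∈ Finset.univ.filter (fun i => P i = 0), M i j • L i‖ := by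
  have hlip : |max a' 0 - max a 0| ≤ |a' - a| := abs_max_sub_max_le_abs a' a 0
  have hdiff : a' - a = ∑ i, M i j * (x' i - x i) := by
    rw [ha, ha', add_sub_add_right_eq_sub, ← Finset.sum_sub_distrib]
    exact Finset.sum_congr rfl (fun i _ => by ring)
  have hsplit : (Finset.univ : Finset (Fin m)) =
      (Finset.univ.filter (fun i => P i = 1)) ∪ (Finset.univ.filter (fun i => P i = 0)) := by
    ext i; simp; rcases hP i with h | h <;> simp [h]
  have hdisj : Disjoint (Finset.univ.filter (fun i : Fin m => P i = 1))
      (Finset.univ.filter (fun i => P i = 0)) := by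
    simp [Finset.disjoint_left]; intro i h; omega
  have hdiff2 : a' - a =
      (∑ i ∈ Finset.univ.filter (fun i => P i = 1), M i j * (x' i - x i)) +
      (∑ i ∈ Finset.univ.filter (fun i => P i = 0), M i j * (x' i - x i)) := by
    rw [hdiff, ← Finset.sum_union hdisj, ← hsplit]
  -- bound the P=1 part
  have h1 : |∑ i ∈ Finset.univ.filter (fun i => P i = 1), M i j * (x' i - x i)| ≤
      ∑ i ∈ Finset.univ.filter (fun i => P i = 1), |M i j| * U i := by
    refine (Finset.abs_sum_le_sum_abs _ _).trans ?_
    refine Finset.sum_le_sum (fun i _ => ?_)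
    rw [abs_mul]
    exact mul_le_mul_of_nonneg_left (hUb i) (abs_nonneg _)
  -- the P=0 part is an inner product
  have h0eq : (∑ i ∈ Finset.univ.filter (fun i => P i = 0), M i j * (x' i - x i)) =
      inner ℝ (∑ i ∈ Finset.univ.filter (fun i => P i = 0), M i j • L i) (X' - X) := by
    rw [sum_inner]
    refine Finset.sum_congr rfl (fun i hi => ?_)
    simp only [Finset.mem_filter] at hi
    obtain ⟨hx, hx'⟩ := haff i hi.2
    rw [real_inner_smul_left]
    have : (inner ℝ (L i) (X' - X) : ℝ) = ∑ l, L i l * (X' l - X l) := by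
      rw [PiLp.inner_apply]
      refine Finset.sum_congr rfl (fun l _ => ?_)
      simp [RCLike.inner_apply, PiLp.sub_apply, mul_comm]
    rw [this, hx, hx', add_sub_add_right_eq_sub, ← Finset.sum_sub_distrib]
    congr 1
    exact Finset.sum_congr rfl (fun l _ => by ring)
  have h0 : |∑ i ∈ Finset.univ.filter (fun i => P i = 0), M i j * (x' i - x i)| ≤
      r * ‖∑ i ∈ Finset.univ.filter (fun i => P i = 0), M i j • L i‖ := by
    rw [h0eq]
    calc |(inner ℝ (∑ i ∈ Finset.univ.filter (fun i => P i = 0), M i j • L i) (X' - X) : ℝ)|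
        ≤ ‖∑ i ∈ Finset.univ.filter (fun i => P i = 0), M i j • L i‖ * ‖X' - X‖ :=
          abs_real_inner_le_norm _ _
      _ ≤ ‖∑ i ∈ Finset.univ.filter (fun i => P i = 0), M i j • L i‖ * r :=
          mul_le_mul_of_nonneg_left hXX' (norm_nonneg _)
      _ = r * ‖∑ i ∈ Finset.univ.filter (fun i => P i = 0), M i j • L i‖ := mul_comm _ _
  calc |max a' 0 - max a 0| ≤ |a' - a| := hlip
    _ ≤ _ := by rw [hdiff2]; exact (abs_add_le _ _).trans (add_le_add h1 h0)
end
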